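/- arXiv:1308.5394 — 3 statements merged into one kernel-verified Lean document; each statement's English description precedes it below -/
import Mathlib

section
/- For every totally real cubic number field E, if (e₁, e₂) is any ℤ-basis of the rank-2 free ℤ-module O_E/ℤ and G is the 2×2 Gram matrix with entries G_{ij} = B(e_i, e_j), where B is the symmetric bilinear form associated with Q_E (i.e. B(x,y) = (Q_E(x+y) − Q_E(x) − Q_E(y))/2), then 3 · det G = D_E, the discriminant of E. In particular det G is independent of the choice of basis. -/
open scoped BigOperators
open NumberField Filter

noncomputable section

/-- A totally real cubic number field, realized as a subfield of `ℝ`. -/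
structure TRCubicField : Type where
  K : IntermediateField ℚ ℝ
  dim3 : Module.finrank ℚ K = 3
  totallyReal : ∀ φ : ↥K →+* ℂ, ∀ x : ↥K, (φ x).im = 0

namespace TRCubicField

instance (E : TRCubicField) : FiniteDimensional ℚ E.K :=
  FiniteDimensional.of_finrank_pos (by rw [E.dim3]; norm_num)

instance (E : TRCubicField) : NumberField ↥E.K where
  to_charZero := inferInstance
  to_finiteDimensional := inferInstance

/-- The quotient `O_E/ℤ` of the ring of integers by `ℤ = ℤ·1`. -/
abbrev intsModZ (E : TRCubicField) :=
  (𝓞 E.K) ⧸ AddSubgroup.zmultiples (1 : 𝓞 E.K)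

/-- The quadratic form `Q_E(ξ) = Tr_{E/ℚ}(ξ²) - (1/3)·(Tr_{E/ℚ} ξ)²` on `O_E`. -/
def Q (E : TRCubicField) (x : 𝓞 E.K) : ℝ :=
  ((Algebra.trace ℚ E.K ((x : E.K) ^ 2) : ℚ) : ℝ)
    - (1 / 3) * ((Algebra.trace ℚ E.K (x : E.K) : ℚ) : ℝ) ^ 2

/-- `Q_E` descends to `O_E/ℤ` (it is invariant under translation by `ℤ`), so evaluating
it on any representative gives a well-defined function on the quotient. -/
def Qbar (E : TRCubicField) (ξ : E.intsModZ) : ℝ := E.Q ξ.out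

/-- The first successive minimum `m₁(E)` of `Q_E` on `O_E/ℤ`. -/
def m1 (E : TRCubicField) : ℝ :=
  sInf {r : ℝ | ∃ ξ : E.intsModZ, ξ ≠ 0 ∧ E.Qbar ξ = r}

/-- The second successive minimum `m₂(E)` of `Q_E` on `O_E/ℤ`. -/
def m2 (E : TRCubicField) : ℝ :=
  sInf {r : ℝ | ∃ ξ η : E.intsModZ,
    LinearIndependent ℤ ![ξ, η] ∧ E.Qbar ξ ≤ r ∧ E.Qbar η ≤ r}

/-- `ρ_E = res_{s=1} ζ_E(s) = 4·h_E·R_E/√(D_E)` by the analytic class number formula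
(for a totally real cubic field). -/
def rho (E : TRCubicField) : ℝ :=
  4 * (NumberField.classNumber E.K : ℝ) * NumberField.Units.regulator E.K /
    Real.sqrt (NumberField.discr E.K : ℝ)

/-- The number of nonzero `ξ ∈ O_E/ℤ` with `Q_E(ξ) ≤ X`. -/
def latticeCount (E : TRCubicField) (X : ℝ) : ℕ :=
  Nat.card {ξ : E.intsModZ // ξ ≠ 0 ∧ E.Qbar ξ ≤ X}

end TRCubicField

set_option maxHeartbeats 1000000
set_option synthInstance.maxHeartbeats 400000

namespace TRCubicField

variable (E : TRCubicField)

/-- Real-valued trace. -/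
def T (E : TRCubicField) (x : 𝓞 E.K) : ℝ :=
  ((Algebra.trace ℚ E.K (x : E.K) : ℚ) : ℝ)

lemma trace_ratCast (q : ℚ) : Algebra.trace ℚ E.K ((q : E.K)) = 3 * q := by
  rw [show ((q : E.K)) = algebraMap ℚ E.K q from (eq_ratCast (algebraMap ℚ E.K) q).symm,
    Algebra.trace_algebraMap, E.dim3]
  push_cast; ring

lemma trace_ratCast_mul (q : ℚ) (y : E.K) :
    Algebra.trace ℚ E.K ((q : E.K) * y) = q * Algebra.trace ℚ E.K y := by
  rw [show ((q : E.K)) = algebraMap ℚ E.K q from (eq_ratCast (algebraMap ℚ E.K) q).symm,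
    ← Algebra.smul_def, map_smul, smul_eq_mul]

lemma Q_add_int (x : 𝓞 E.K) (n : ℤ) : E.Q (x + (n : 𝓞 E.K)) = E.Q x := by
  have e1 : (((x + (n : 𝓞 E.K)) : 𝓞 E.K) : E.K) = (x : E.K) + ((n : ℚ) : E.K) := by
    push_cast; simp
  have e2 : ((x : E.K) + ((n : ℚ) : E.K)) ^ 2
      = (x : E.K) ^ 2 + (((2 * n : ℚ) : E.K) * (x : E.K) + (((n : ℚ) * (n : ℚ) : ℚ) : E.K)) := by
    push_cast; ring
  unfold Q
  rw [e1, e2, map_add, map_add, trace_ratCast_mul, trace_ratCast, map_add, trace_ratCast]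
  push_cast; ring

lemma Q_eq_of_mk_eq {x y : 𝓞 E.K}
    (h : (x : E.intsModZ) = (y : E.intsModZ)) : E.Q x = E.Q y := by
  rw [QuotientAddGroup.eq] at h
  obtain ⟨n, hn⟩ := AddSubgroup.mem_zmultiples_iff.mp h
  have : y = x + (n : 𝓞 E.K) := by
    have : -x + y = n • 1 := hn.symm
    rw [zsmul_one] at this
    linear_combination (norm := abel) this
  rw [this, E.Q_add_int]

lemma Qbar_mk (x : 𝓞 E.K) : E.Qbar (x : E.intsModZ) = E.Q x := by
  unfold Qbar
  exact E.Q_eq_of_mk_eq (by rw [QuotientAddGroup.out_eq'])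

lemma T_eq_intTrace (x : 𝓞 E.K) :
    E.T x = ((Algebra.trace ℤ (𝓞 E.K) x : ℤ) : ℝ) := by
  unfold T
  rw [show (x : E.K) = algebraMap (𝓞 E.K) E.K x from rfl,
    Algebra.trace_localization ℤ (nonZeroDivisors ℤ)]
  simp [eq_intCast]

lemma T_one : E.T 1 = 3 := by
  have : ((1 : 𝓞 E.K) : E.K) = ((1 : ℚ) : E.K) := by norm_num
  unfold T
  rw [this, E.trace_ratCast]
  norm_num

lemma Q_as_T (x : 𝓞 E.K) : E.Q x = E.T (x * x) - (1 / 3) * (E.T x) ^ 2 := by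
  unfold Q T
  congr 2
  push_cast
  ring

end TRCubicField

/-- For any `ℤ`-basis `(e₁, e₂)` of `O_E/ℤ`, three times the determinant
of the Gram matrix of the polarization `B(x,y) = (Q_E(x+y) - Q_E(x) - Q_E(y))/2` equals
the discriminant `D_E`. -/
theorem statement5 (E : TRCubicField) (b : Module.Basis (Fin 2) ℤ E.intsModZ) :
    3 * Matrix.det (Matrix.of fun i j : Fin 2 =>
        (E.Qbar (b i + b j) - E.Qbar (b i) - E.Qbar (b j)) / 2)
      = (NumberField.discr E.K : ℝ) := by
  classical
  set f : Fin 2 → 𝓞 E.K := fun i => (b i).out with hf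
  have hmkf : ∀ i, ((f i : E.intsModZ)) = b i := fun i => QuotientAddGroup.out_eq' _
  -- Gram entries in terms of traces
  have key : ∀ i j, (E.Qbar (b i + b j) - E.Qbar (b i) - E.Qbar (b j)) / 2
      = E.T (f i * f j) - (1 / 3) * E.T (f i) * E.T (f j) := by
    intro i j
    have h1 : b i + b j = ((f i + f j : 𝓞 E.K) : E.intsModZ) := by
      rw [QuotientAddGroup.mk_add, hmkf, hmkf]
    rw [h1, E.Qbar_mk, ← hmkf i, ← hmkf j, E.Qbar_mk, E.Qbar_mk]
    rw [E.Q_as_T, E.Q_as_T, E.Q_as_T]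
    have e1 : (f i + f j) * (f i + f j)
        = f i * f i + (f i * f j + (f i * f j + f j * f j)) := by ring
    have e2 : ∀ x y : 𝓞 E.K, E.T (x + y) = E.T x + E.T y := by
      intro x y
      unfold TRCubicField.T
      push_cast [map_add]
      ring
    rw [e1, e2, e2, e2, e2]
    ring
  -- lift to a ℤ-basis of the ring of integers
  set g : Fin 3 → 𝓞 E.K := ![1, f 0, f 1] with hg
  have hli : LinearIndependent ℤ g := by
    rw [Fintype.linearIndependent_iff]
    intro a ha
    have hsum : a 0 • (1 : 𝓞 E.K) + (a 1 • f 0 + a 2 • f 1) = 0 := by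
      simpa [hg, Fin.sum_univ_three, add_assoc] using ha
    have hq : a 1 • b 0 + a 2 • b 1 = (0 : E.intsModZ) := by
      have h0 := congrArg (QuotientAddGroup.mk
        (s := AddSubgroup.zmultiples (1 : 𝓞 E.K))) hsum
      have hz : (((a 0 : ℤ) : 𝓞 E.K) : E.intsModZ) = 0 :=
        (QuotientAddGroup.eq_zero_iff _).mpr
          (by simpa [zsmul_one] using AddSubgroup.zsmul_mem_zmultiples (1 : 𝓞 E.K) (a 0))
      simpa [QuotientAddGroup.mk_add, QuotientAddGroup.mk_zsmul, hz, hmkf] using h0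
    have h12 : ∀ k : Fin 2, (![a 1, a 2]) k = 0 := by
      have := Fintype.linearIndependent_iff.mp b.linearIndependent ![a 1, a 2]
      apply this
      simpa [Fin.sum_univ_two] using hq
    have ha1 : a 1 = 0 := h12 0
    have ha2 : a 2 = 0 := h12 1
    have ha0 : a 0 = 0 := by
      have : a 0 • (1 : 𝓞 E.K) = 0 := by
        simpa [ha1, ha2] using hsum
      simpa using this
    intro i
    fin_cases i <;> assumption
  have hsp : ⊤ ≤ Submodule.span ℤ (Set.range g) := by
    intro x _
    set r : Fin 2 → ℤ := fun k => b.repr ((x : E.intsModZ)) k with hr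
    have hx : ((x : E.intsModZ)) = r 0 • b 0 + r 1 • b 1 := by
      have := (b.sum_repr ((x : E.intsModZ))).symm
      rw [Fin.sum_univ_two] at this
      exact this
    have hz : ((x - (r 0 • f 0 + r 1 • f 1) : 𝓞 E.K) : E.intsModZ) = 0 := by
      rw [QuotientAddGroup.mk_sub, QuotientAddGroup.mk_add,
        QuotientAddGroup.mk_zsmul, QuotientAddGroup.mk_zsmul, hmkf, hmkf,
        sub_eq_zero]
      exact hx
    obtain ⟨n, hn⟩ := AddSubgroup.mem_zmultiples_iff.mp
      ((QuotientAddGroup.eq_zero_iff _).mp hz)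
    have hxeq : x = n • g 0 + (r 0 • g 1 + r 1 • g 2) := by
      have : n • (1 : 𝓞 E.K) = x - (r 0 • f 0 + r 1 • f 1) := hn
      have hx2 : x = n • (1 : 𝓞 E.K) + (r 0 • f 0 + r 1 • f 1) := by
        rw [this]; abel
      simpa [hg] using hx2
    rw [hxeq]
    refine Submodule.add_mem _ ?_ (Submodule.add_mem _ ?_ ?_) <;>
      exact Submodule.smul_mem _ _ (Submodule.subset_span ⟨_, rfl⟩)
  set c : Module.Basis (Fin 3) ℤ (𝓞 E.K) := Module.Basis.mk hli hsp with hc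
  have hcc : ∀ i, c i = g i := fun i => by rw [hc, Module.Basis.mk_apply]
  -- express the discriminant as the determinant of the real trace matrix
  have h2 : ((NumberField.discr E.K : ℤ) : ℝ)
      = (Matrix.of fun i j : Fin 3 => E.T (c i * c j)).det := by
    rw [← NumberField.discr_eq_discr _ c, Algebra.discr_def,
      show (((Algebra.traceMatrix ℤ c).det : ℤ) : ℝ)
        = (Int.castRingHom ℝ) (Algebra.traceMatrix ℤ c).det from rfl,
      RingHom.map_det]
    congr 1
    ext i j
    simp only [RingHom.mapMatrix_apply, Matrix.map_apply, Matrix.of_apply,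
      Algebra.traceMatrix_apply, Algebra.traceForm_apply, TRCubicField.T_eq_intTrace]
    rfl
  -- put everything together
  have hM : (Matrix.of fun i j : Fin 2 =>
        (E.Qbar (b i + b j) - E.Qbar (b i) - E.Qbar (b j)) / 2)
      = Matrix.of fun i j : Fin 2 =>
        E.T (f i * f j) - (1 / 3) * E.T (f i) * E.T (f j) := by
    ext i j
    exact key i j
  rw [hM, h2, Matrix.det_fin_two, Matrix.det_fin_three]
  simp only [Matrix.of_apply, hcc, hg]
  simp only [Matrix.cons_val_zero, Matrix.cons_val_one, Matrix.head_cons,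
    Matrix.cons_val_two, Matrix.tail_cons, one_mul, mul_one, E.T_one]
  rw [show f 1 * f 0 = f 0 * f 1 from mul_comm _ _]
  ring
end
end

section
/- For all integers m, n ≥ 1 and every Schwartz function Φ : ℝ^m × ℝ^n → ℂ, there exist nonnegative Schwartz functions φ₁ : ℝ^m → ℝ and φ₂ : ℝ^n → ℝ such that |Φ(x, y)| ≤ φ₁(x) · φ₂(y) for all x ∈ ℝ^m and y ∈ ℝ^n. -/
noncomputable section

open MeasureTheory Set Function
open scoped Convolution ContDiff

/-- Temperate growth of the squared norm on a real inner product space. -/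
lemma hasTemperateGrowth_norm_sq {E : Type*} [NormedAddCommGroup E]
    [InnerProductSpace ℝ E] :
    Function.HasTemperateGrowth (fun x : E => ‖x‖ ^ 2) := by
  apply Function.HasTemperateGrowth.of_fderiv (k := 2) (C := 1)
  · have hf : (fderiv ℝ fun x : E => ‖x‖ ^ 2)
        = ⇑(2 • (innerSL ℝ : E →L[ℝ] E →L[ℝ] ℝ)) := by
      funext x
      rw [ContinuousLinearMap.smul_apply]
      exact (hasStrictFDerivAt_norm_sq x).hasFDerivAt.fderiv
    rw [hf]
    exact (2 • (innerSL ℝ : E →L[ℝ] E →L[ℝ] ℝ)).hasTemperateGrowth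
  · exact (contDiff_norm_sq ℝ (n := 1)).differentiable one_ne_zero
  · intro x
    have : ‖(‖x‖ ^ 2 : ℝ)‖ = ‖x‖ ^ 2 := Real.norm_of_nonneg (by positivity)
    rw [this]
    nlinarith [norm_nonneg x]

/-- A nonnegative, antitone, rapidly decreasing function on `ℝ` is dominated on `[0, ∞)`
by a nonnegative Schwartz function. -/
lemma exists_schwartz_majorant (h : ℝ → ℝ) (h0 : ∀ t, 0 ≤ h t) (hA : Antitone h)
    (hdec : ∀ k : ℕ, ∃ C : ℝ, ∀ t : ℝ, 1 ≤ t → h t * t ^ k ≤ C) :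
    ∃ G : SchwartzMap ℝ ℝ, (∀ t, 0 ≤ G t) ∧ ∀ t : ℝ, 0 ≤ t → h t ≤ G t := by
  classical
  -- the bump function
  set ρb : ContDiffBump (0 : ℝ) := ⟨1/2, 1, by norm_num, by norm_num⟩ with hρb
  set ρ : ℝ → ℝ := ρb.normed volume with hρ
  -- the shifted antitone majorant, cut off at `-1`
  set w : ℝ → ℝ := Set.indicator (Set.Ici (-1 : ℝ)) (fun t => h (t - 1)) with hw
  have hA' : Antitone (fun t : ℝ => h (t - 1)) :=
    hA.comp_monotone (fun a b hab => by simpa using sub_le_sub_right hab 1)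
  have hwloc : LocallyIntegrable w volume :=
    hA'.locallyIntegrable.indicator measurableSet_Ici
  have hw0 : ∀ t, 0 ≤ w t := fun t => Set.indicator_nonneg (fun s _ => h0 _) t
  have hwle : ∀ x t : ℝ, |x - t| ≤ 1 → w t ≤ h (x - 2) := by
    intro x t hxt
    have h1 : x - 1 ≤ t := by
      have := abs_le.1 hxt
      linarith [this.2]
    by_cases ht : t ∈ Set.Ici (-1 : ℝ)
    · rw [hw, Set.indicator_of_mem ht]
      exact hA (by linarith)
    · rw [hw, Set.indicator_of_notMem ht]
      exact h0 _
  have hwge : ∀ x t : ℝ, 0 ≤ x → |x - t| ≤ 1 → h x ≤ w t := by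
    intro x t hx hxt
    have h1 := abs_le.1 hxt
    have ht : t ∈ Set.Ici (-1 : ℝ) := by
      simp only [Set.mem_Ici]; linarith
    rw [hw, Set.indicator_of_mem ht]
    exact hA (by linarith)
  have hwzero : ∀ x t : ℝ, x < -2 → |x - t| ≤ 1 → w t = 0 := by
    intro x t hx hxt
    have h1 := abs_le.1 hxt
    have ht : t ∉ Set.Ici (-1 : ℝ) := by
      simp only [Set.mem_Ici, not_le]; linarith
    rw [hw, Set.indicator_of_notMem ht]
  -- the convolution
  set G : ℝ → ℝ := w ⋆[ContinuousLinearMap.lsmul ℝ ℝ, volume] ρ with hG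
  have hGsmooth : ContDiff ℝ ∞ G :=
    ρb.hasCompactSupport_normed.contDiff_convolution_right _ hwloc ρb.contDiff_normed
  -- iterated derivatives of the bump
  set ρn : ℕ → ℝ → ℝ := fun n => deriv^[n] ρ with hρn
  have hρn_smooth : ∀ n, ContDiff ℝ ∞ (ρn n) := fun n =>
    ContDiff.iterate_deriv n ρb.contDiff_normed
  have hρn_supp : ∀ n, HasCompactSupport (ρn n) := by
    intro n
    induction n with
    | zero => exact ρb.hasCompactSupport_normed
    | succ n ih =>
      have : ρn (n + 1) = deriv (ρn n) := by
        rw [hρn]; exact Function.iterate_succ_apply' deriv n ρ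
      rw [this]; exact ih.deriv
  have hρn_tsupp : ∀ n, tsupport (ρn n) ⊆ Metric.closedBall (0 : ℝ) 1 := by
    intro n
    induction n with
    | zero =>
      simp only [hρn, Function.iterate_zero, id_eq]
      rw [ρb.tsupport_normed_eq]
    | succ n ih =>
      have h1 : ρn (n + 1) = deriv (ρn n) := by
        rw [hρn]; exact Function.iterate_succ_apply' deriv n ρ
      rw [h1]
      refine subset_trans ?_ ih
      exact closure_minimal (support_deriv_subset) (isClosed_tsupport _)
  -- the iterated derivatives of G
  have hconv : ∀ n, iteratedDeriv n G = w ⋆[ContinuousLinearMap.lsmul ℝ ℝ, volume] (ρn n) := by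
    intro n
    induction n with
    | zero => simp [hρn, iteratedDeriv_zero, hG]
    | succ n ih =>
      rw [iteratedDeriv_succ, ih]
      funext x
      have hder := HasCompactSupport.hasDerivAt_convolution_right
        (ContinuousLinearMap.lsmul ℝ ℝ) hwloc (hρn_supp n)
        ((hρn_smooth n).of_le (mod_cast le_top)) x
      rw [hder.deriv]
      congr 1
      rw [hρn]
      exact (Function.iterate_succ_apply' deriv n ρ).symm
  -- the weight function
  set W : ℝ → ℝ := Set.indicator (Set.Ici (-2 : ℝ)) (fun s => h (s - 2)) with hW
  have hW0 : ∀ x, 0 ≤ W x := fun x => Set.indicator_nonneg (fun s _ => h0 _) x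
  -- key bound on the iterated derivatives
  have hbound : ∀ n : ℕ, ∃ D : ℝ, 0 ≤ D ∧ ∀ x : ℝ,
      ‖(w ⋆[ContinuousLinearMap.lsmul ℝ ℝ, volume] (ρn n)) x‖ ≤ W x * D := by
    intro n
    refine ⟨∫ t, ‖ρn n t‖, integral_nonneg fun t => norm_nonneg _, fun x => ?_⟩
    have hcont : Continuous fun t => ρn n (x - t) :=
      (hρn_smooth n).continuous.comp (continuous_const.sub continuous_id)
    have hcs : HasCompactSupport fun t => ρn n (x - t) :=
      (hρn_supp n).comp_homeomorph (Homeomorph.subLeft x)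
    have hint : Integrable (fun t => ‖ρn n (x - t)‖) volume :=
      (hcont.integrable_of_hasCompactSupport hcs).norm
    rw [convolution_def]
    calc ‖∫ t, (ContinuousLinearMap.lsmul ℝ ℝ) (w t) (ρn n (x - t)) ∂volume‖
        ≤ ∫ t, W x * ‖ρn n (x - t)‖ ∂volume := by
          apply norm_integral_le_of_norm_le (hint.const_mul (W x))
          filter_upwards with t
          simp only [ContinuousLinearMap.lsmul_apply, smul_eq_mul]
          rw [norm_mul]
          by_cases hz : ρn n (x - t) = 0
          · simp [hz]
          · have hmem : x - t ∈ tsupport (ρn n) := subset_closure (by simpa using hz)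
            have hxt : |x - t| ≤ 1 := by
              have := hρn_tsupp n hmem
              simpa [Real.norm_eq_abs] using Metric.mem_closedBall.1 this
            have hwx : ‖w t‖ ≤ W x := by
              rw [Real.norm_of_nonneg (hw0 t)]
              by_cases hx2 : x ∈ Set.Ici (-2 : ℝ)
              · rw [hW, Set.indicator_of_mem hx2]
                exact hwle x t hxt
              · rw [hW, Set.indicator_of_notMem hx2]
                rw [hwzero x t (by simpa using hx2) hxt]
            exact mul_le_mul_of_nonneg_right hwx (norm_nonneg _)
      _ = W x * ∫ t, ‖ρn n (x - t)‖ ∂volume := by rw [integral_const_mul]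
      _ = W x * ∫ t, ‖ρn n t‖ ∂volume := by
          congr 1
          exact integral_sub_left_eq_self (fun t => ‖ρn n t‖) volume x
  -- G is Schwartz
  have hWbound : ∀ k : ℕ, ∃ M : ℝ, 0 ≤ M ∧ ∀ x : ℝ, |x| ^ k * W x ≤ M := by
    intro k
    obtain ⟨Ck, hCk⟩ := hdec k
    have hCk0 : 0 ≤ Ck := le_trans (by simpa using mul_nonneg (h0 1) (by norm_num : (0:ℝ) ≤ 1 ^ k)) (hCk 1 le_rfl)
    refine ⟨3 ^ k * max (h (-4)) Ck, by positivity, fun x => ?_⟩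
    by_cases hx2 : x ∈ Set.Ici (-2 : ℝ)
    · have hx2' : (-2 : ℝ) ≤ x := hx2
      rw [hW, Set.indicator_of_mem hx2]
      by_cases hx3 : x ≤ 3
      · have h1 : |x| ≤ 3 := abs_le.2 ⟨by linarith, hx3⟩
        have h2 : h (x - 2) ≤ h (-4) := hA (by linarith)
        calc |x| ^ k * h (x - 2) ≤ 3 ^ k * h (-4) := by
              apply mul_le_mul (pow_le_pow_left₀ (abs_nonneg x) h1 k) h2 (h0 _) (by positivity)
          _ ≤ 3 ^ k * max (h (-4)) Ck := by
              apply mul_le_mul_of_nonneg_left (le_max_left _ _) (by positivity)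
      · push_neg at hx3
        have hx1 : (1 : ℝ) ≤ x - 2 := by linarith
        have h1 : |x| ≤ 3 * (x - 2) := by
          rw [abs_of_nonneg (by linarith : (0:ℝ) ≤ x)]; linarith
        calc |x| ^ k * h (x - 2) ≤ (3 * (x - 2)) ^ k * h (x - 2) := by
              apply mul_le_mul_of_nonneg_right (pow_le_pow_left₀ (abs_nonneg x) h1 k) (h0 _)
          _ = 3 ^ k * (h (x - 2) * (x - 2) ^ k) := by rw [mul_pow]; ring
          _ ≤ 3 ^ k * Ck := by
              apply mul_le_mul_of_nonneg_left (hCk _ hx1) (by positivity)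
          _ ≤ 3 ^ k * max (h (-4)) Ck := by
              apply mul_le_mul_of_nonneg_left (le_max_right _ _) (by positivity)
    · rw [hW, Set.indicator_of_notMem hx2]
      simp only [mul_zero]
      positivity
  refine ⟨⟨G, hGsmooth, ?_⟩, ?_, ?_⟩
  · -- decay
    intro k n
    obtain ⟨D, hD0, hD⟩ := hbound n
    obtain ⟨M, hM0, hM⟩ := hWbound k
    refine ⟨M * D, fun x => ?_⟩
    have h1 : ‖iteratedFDeriv ℝ n G x‖ = ‖iteratedDeriv n G x‖ :=
      norm_iteratedFDeriv_eq_norm_iteratedDeriv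
    rw [h1, hconv n]
    calc ‖x‖ ^ k * ‖(w ⋆[ContinuousLinearMap.lsmul ℝ ℝ, volume] (ρn n)) x‖
        ≤ |x| ^ k * (W x * D) := by
          rw [Real.norm_eq_abs]
          exact mul_le_mul_of_nonneg_left (hD x) (by positivity)
      _ = (|x| ^ k * W x) * D := by ring
      _ ≤ M * D := mul_le_mul_of_nonneg_right (hM x) hD0
  · -- nonnegativity
    intro t
    show 0 ≤ G t
    rw [hG, convolution_def]
    apply integral_nonneg
    intro s
    simp only [ContinuousLinearMap.lsmul_apply, smul_eq_mul]
    exact mul_nonneg (hw0 s) (ρb.nonneg_normed _)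
  · -- domination on [0, ∞)
    intro x hx
    show h x ≤ G x
    have hce : ConvolutionExistsAt w ρ x (ContinuousLinearMap.lsmul ℝ ℝ) volume :=
      HasCompactSupport.convolutionExists_right (ContinuousLinearMap.lsmul ℝ ℝ)
        ρb.hasCompactSupport_normed hwloc ρb.continuous_normed x
    have hcont : Continuous fun t => ρ (x - t) :=
      ρb.continuous_normed.comp (continuous_const.sub continuous_id)
    have hcs : HasCompactSupport fun t => ρ (x - t) :=
      ρb.hasCompactSupport_normed.comp_homeomorph (Homeomorph.subLeft x)
    have hint : Integrable (fun t => h x * ρ (x - t)) volume :=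
      (hcont.integrable_of_hasCompactSupport hcs).const_mul (h x)
    have key : ∫ t, h x * ρ (x - t) ∂volume ≤ G x := by
      rw [hG, convolution_def]
      apply integral_mono hint hce
      intro t
      simp only [ContinuousLinearMap.lsmul_apply, smul_eq_mul]
      by_cases hz : ρ (x - t) = 0
      · rw [hz]; simp
      · have hmem : x - t ∈ Function.support ρ := by simpa using hz
        rw [ρb.support_normed_eq] at hmem
        have hxt : |x - t| ≤ 1 := by
          have := Metric.mem_ball.1 hmem
          rw [Real.dist_eq, sub_zero] at this
          exact this.le
        exact mul_le_mul_of_nonneg_right (hwge x t hx hxt) (ρb.nonneg_normed _)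
    have heq : ∫ t, h x * ρ (x - t) ∂volume = h x := by
      rw [integral_const_mul, integral_sub_left_eq_self ρ volume x, ρb.integral_normed, mul_one]
    calc h x = ∫ t, h x * ρ (x - t) ∂volume := heq.symm
      _ ≤ G x := key

/-- For all `m, n ≥ 1` and every Schwartz function
`Φ : ℝ^m × ℝ^n → ℂ` there are nonnegative Schwartz functions `φ₁ : ℝ^m → ℝ` and
`φ₂ : ℝ^n → ℝ` with `|Φ(x,y)| ≤ φ₁(x)·φ₂(y)` for all `x, y`. -/
theorem statement14 (m n : ℕ) (hm : 1 ≤ m) (hn : 1 ≤ n)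
    (Φ : SchwartzMap (EuclideanSpace ℝ (Fin m) × EuclideanSpace ℝ (Fin n)) ℂ) :
    ∃ (φ₁ : SchwartzMap (EuclideanSpace ℝ (Fin m)) ℝ)
      (φ₂ : SchwartzMap (EuclideanSpace ℝ (Fin n)) ℝ),
      (∀ x, 0 ≤ φ₁ x) ∧ (∀ y, 0 ≤ φ₂ y) ∧
      ∀ (x : EuclideanSpace ℝ (Fin m)) (y : EuclideanSpace ℝ (Fin n)),
        ‖Φ (x, y)‖ ≤ φ₁ x * φ₂ y := by
  classical
  set Z := EuclideanSpace ℝ (Fin m) × EuclideanSpace ℝ (Fin n) with hZ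
  -- global bound for Φ
  obtain ⟨B, hB⟩ := Φ.decay' 0 0
  have hB' : ∀ z : Z, ‖Φ z‖ ≤ B := by
    intro z
    have := hB z
    rw [pow_zero, one_mul] at this; rwa [norm_iteratedFDeriv_zero] at this
  -- the decreasing envelope
  set S : ℝ → ℝ := fun t => ⨆ z : Z, (if t ≤ ‖z‖ ^ 2 then ‖Φ z‖ else 0) with hS
  have hbdd : ∀ t : ℝ, BddAbove (Set.range fun z : Z => (if t ≤ ‖z‖ ^ 2 then ‖Φ z‖ else 0)) := by
    intro t
    refine ⟨max B 0, ?_⟩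
    rintro _ ⟨z, rfl⟩
    by_cases hz : t ≤ ‖z‖ ^ 2
    · simp only [if_pos hz]; exact le_max_of_le_left (hB' z)
    · simp only [if_neg hz]; exact le_max_right _ _
  have hS_ge : ∀ (t : ℝ) (z : Z), t ≤ ‖z‖ ^ 2 → ‖Φ z‖ ≤ S t := by
    intro t z hz
    have := le_ciSup (hbdd t) z
    rwa [if_pos hz] at this
  have hS0 : ∀ t, 0 ≤ S t := by
    intro t
    have h1 : (0 : ℝ) ≤ (if t ≤ ‖(0 : Z)‖ ^ 2 then ‖Φ 0‖ else 0) := by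
      by_cases hz : t ≤ ‖(0 : Z)‖ ^ 2
      · simp only [if_pos hz]; exact norm_nonneg _
      · rw [if_neg hz]
    exact le_trans h1 (le_ciSup (hbdd t) 0)
  have hS_anti : Antitone S := by
    intro t₁ t₂ h12
    apply ciSup_mono (hbdd t₁)
    intro z
    by_cases hz : t₂ ≤ ‖z‖ ^ 2
    · rw [if_pos hz, if_pos (le_trans h12 hz)]
    · rw [if_neg hz]
      by_cases hz1 : t₁ ≤ ‖z‖ ^ 2
      · rw [if_pos hz1]; exact norm_nonneg _
      · rw [if_neg hz1]
  have hS_dec : ∀ k : ℕ, ∃ C : ℝ, 0 ≤ C ∧ ∀ t : ℝ, 1 ≤ t → S t * t ^ k ≤ C := by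
    intro k
    obtain ⟨c, hc⟩ := Φ.decay' (2 * k) 0
    have hc' : ∀ z : Z, ‖z‖ ^ (2 * k) * ‖Φ z‖ ≤ c := by
      intro z
      have := hc z
      rwa [norm_iteratedFDeriv_zero] at this
    have hc0 : 0 ≤ c := le_trans (by positivity) (hc' 0)
    refine ⟨c, hc0, fun t ht => ?_⟩
    have ht0 : (0 : ℝ) < t := lt_of_lt_of_le zero_lt_one ht
    have hSt : S t ≤ c / t ^ k := by
      apply Real.iSup_le _ (by positivity)
      intro z
      by_cases hz : t ≤ ‖z‖ ^ 2
      · rw [if_pos hz]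
        rw [le_div_iff₀ (by positivity)]
        calc ‖Φ z‖ * t ^ k ≤ ‖Φ z‖ * ‖z‖ ^ (2 * k) := by
              apply mul_le_mul_of_nonneg_left _ (norm_nonneg _)
              calc t ^ k ≤ (‖z‖ ^ 2) ^ k :=
                    pow_le_pow_left₀ (le_of_lt ht0) hz k
                _ = ‖z‖ ^ (2 * k) := by rw [← pow_mul, mul_comm]
          _ ≤ c := by rw [mul_comm]; exact hc' z
      · rw [if_neg hz]; positivity
    calc S t * t ^ k ≤ (c / t ^ k) * t ^ k :=
          mul_le_mul_of_nonneg_right hSt (by positivity)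
      _ = c := div_mul_cancel₀ c (by positivity)
  -- h = sqrt of S
  set h : ℝ → ℝ := fun t => Real.sqrt (S t) with hh
  have hh0 : ∀ t, 0 ≤ h t := fun t => Real.sqrt_nonneg _
  have hhA : Antitone h := fun a b hab => Real.sqrt_le_sqrt (hS_anti hab)
  have hhdec : ∀ k : ℕ, ∃ C : ℝ, ∀ t : ℝ, 1 ≤ t → h t * t ^ k ≤ C := by
    intro k
    obtain ⟨c, hc0, hc⟩ := hS_dec (k * 2)
    refine ⟨Real.sqrt c, fun t ht => ?_⟩
    have ht0 : (0 : ℝ) < t := lt_of_lt_of_le zero_lt_one ht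
    rw [← Real.sqrt_sq (by positivity : (0:ℝ) ≤ t ^ k), ← Real.sqrt_mul (hS0 t)]
    apply Real.sqrt_le_sqrt
    calc S t * (t ^ k) ^ 2 = S t * t ^ (k * 2) := by rw [← pow_mul]
      _ ≤ c := hc t ht
  obtain ⟨G, hG0, hGge⟩ := exists_schwartz_majorant h hh0 hhA hhdec
  -- compose with the squared norm
  have upper1 : ∃ (k : ℕ) (C : ℝ), ∀ x : EuclideanSpace ℝ (Fin m),
      ‖x‖ ≤ C * (1 + ‖(fun x : EuclideanSpace ℝ (Fin m) => ‖x‖ ^ 2) x‖) ^ k := by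
    refine ⟨1, 1, fun x => ?_⟩
    have : ‖(‖x‖ ^ 2 : ℝ)‖ = ‖x‖ ^ 2 := Real.norm_of_nonneg (by positivity)
    rw [this]
    nlinarith [norm_nonneg x]
  have upper2 : ∃ (k : ℕ) (C : ℝ), ∀ x : EuclideanSpace ℝ (Fin n),
      ‖x‖ ≤ C * (1 + ‖(fun x : EuclideanSpace ℝ (Fin n) => ‖x‖ ^ 2) x‖) ^ k := by
    refine ⟨1, 1, fun x => ?_⟩
    have : ‖(‖x‖ ^ 2 : ℝ)‖ = ‖x‖ ^ 2 := Real.norm_of_nonneg (by positivity)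
    rw [this]
    nlinarith [norm_nonneg x]
  set φ₁ : SchwartzMap (EuclideanSpace ℝ (Fin m)) ℝ :=
    SchwartzMap.compCLM ℝ (hasTemperateGrowth_norm_sq) upper1 G with hφ₁
  set φ₂ : SchwartzMap (EuclideanSpace ℝ (Fin n)) ℝ :=
    SchwartzMap.compCLM ℝ (hasTemperateGrowth_norm_sq) upper2 G with hφ₂
  have hφ₁app : ∀ x, φ₁ x = G (‖x‖ ^ 2) := fun x => rfl
  have hφ₂app : ∀ y, φ₂ y = G (‖y‖ ^ 2) := fun y => rfl
  refine ⟨φ₁, φ₂, fun x => by rw [hφ₁app]; exact hG0 _,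
    fun y => by rw [hφ₂app]; exact hG0 _, fun x y => ?_⟩
  set a : ℝ := ‖x‖ ^ 2 with ha
  set b : ℝ := ‖y‖ ^ 2 with hb
  have ha0 : 0 ≤ a := by positivity
  have hb0 : 0 ≤ b := by positivity
  have hmax : max a b ≤ ‖((x, y) : Z)‖ ^ 2 := by
    have hp : ‖((x, y) : Z)‖ = max ‖x‖ ‖y‖ := rfl
    rw [hp]
    apply max_le
    · exact pow_le_pow_left₀ (norm_nonneg x) (le_max_left _ _) 2
    · exact pow_le_pow_left₀ (norm_nonneg y) (le_max_right _ _) 2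
  calc ‖Φ (x, y)‖ ≤ S (max a b) := hS_ge _ _ hmax
    _ = h (max a b) * h (max a b) :=
        (Real.mul_self_sqrt (hS0 (max a b))).symm
    _ ≤ h a * h b := by
        apply mul_le_mul (hhA (le_max_left _ _)) (hhA (le_max_right _ _)) (hh0 _) (hh0 _)
    _ ≤ G a * G b := by
        apply mul_le_mul (hGge a ha0) (hGge b hb0) (hh0 _) (hG0 _)
    _ = φ₁ x * φ₂ y := by rw [hφ₁app, hφ₂app]
end
end

section
/- Let n ≥ 1 be an integer and r > 1 a real number. There exists a constant C > 0, depending only on n and r, with the following property: for every function Ψ : ℝ^n → ℂ with M := sup_{x ∈ ℝ^n} (1 + ‖x‖)^{n+r} · |Ψ(x)| < ∞ and every s > 0, one has ∑_{x ∈ ℤ^n, x ≠ 0} |Ψ(s·x)| ≤ C · M · s^{−n} if 0 < s ≤ 1, and ∑_{x ∈ ℤ^n, x ≠ 0} |Ψ(s·x)| ≤ C · M · s^{−r} if s ≥ 1. -/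
noncomputable section

open Real ENNReal Finset

namespace Statement15Aux

lemma bern_step {ρ : ℝ} (hρ0 : 0 < ρ) (hρ1 : ρ ≤ 1) {m : ℝ} (hm : 2 ≤ m) :
    ρ * m ^ (-(1+ρ)) ≤ (m-1) ^ (-ρ) - m ^ (-ρ) := by
  have hm0 : (0:ℝ) < m := by linarith
  have hm1 : (0:ℝ) < m - 1 := by linarith
  have hdm : ρ / m < 1 := by
    rw [div_lt_one hm0]; linarith
  have hdm0 : 0 < ρ / m := by positivity
  have hb : ((m-1)/m) ^ ρ ≤ 1 - ρ/m := by
    have h1 : (m-1)/m = 1 + (-(1/m)) := by field_simp; ring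
    have h2 : (-1:ℝ) ≤ -(1/m) := by
      have : 1/m ≤ 1 := by rw [div_le_one hm0]; linarith
      linarith
    have h3 := rpow_one_add_le_one_add_mul_self h2 hρ0.le hρ1
    rw [h1]
    calc (1 + -(1/m)) ^ ρ ≤ 1 + ρ * -(1/m) := h3
      _ = 1 - ρ/m := by ring
  have hbpos : (0:ℝ) < ((m-1)/m) ^ ρ := Real.rpow_pos_of_pos (by positivity) _
  have hpos2 : (0:ℝ) < 1 - ρ/m := by linarith
  have hinv : (1 + ρ/m) ≤ (((m-1)/m) ^ ρ)⁻¹ := by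
    have step1 : 1 + ρ/m ≤ (1 - ρ/m)⁻¹ := by
      rw [inv_eq_one_div, le_div_iff₀ hpos2]
      nlinarith [sq_nonneg (ρ/m)]
    refine step1.trans ?_
    gcongr
  have hsplit : (m-1) ^ (-ρ) = (((m-1)/m) ^ ρ)⁻¹ * m ^ (-ρ) := by
    rw [← Real.rpow_neg (by positivity), ← Real.mul_rpow (by positivity) (by positivity)]
    congr 1
    field_simp
  have hmρ : (0:ℝ) < m ^ (-ρ) := Real.rpow_pos_of_pos hm0 _
  have hkey : (1 + ρ/m) * m ^ (-ρ) ≤ (m-1) ^ (-ρ) := by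
    rw [hsplit]
    exact mul_le_mul_of_nonneg_right hinv hmρ.le
  have hmm : m ^ (-(1+ρ)) = m⁻¹ * m ^ (-ρ) := by
    rw [show -(1+ρ) = -1 + -ρ by ring, Real.rpow_add hm0, Real.rpow_neg_one]
  have expand : (1 + ρ/m) * m ^ (-ρ) = m ^ (-ρ) + ρ * (m⁻¹ * m ^ (-ρ)) := by
    field_simp
  rw [hmm]
  rw [expand] at hkey
  linarith

lemma tail_summable {ρ : ℝ} (hρ0 : 0 < ρ) (N : ℕ) :
    Summable (fun k : ℕ => ((N:ℝ) + 1 + k) ^ (-(1+ρ))) := by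
  have hg : Summable (fun n : ℕ => (n:ℝ) ^ (-(1+ρ))) :=
    Real.summable_nat_rpow.2 (by linarith)
  have := (summable_nat_add_iff (N+1)).2 hg
  refine this.congr ?_
  intro k
  push_cast
  ring_nf

lemma tail_sum {ρ : ℝ} (hρ0 : 0 < ρ) (hρ1 : ρ ≤ 1) {N : ℕ} (hN : 1 ≤ N) :
    ∑' k : ℕ, ((N:ℝ) + 1 + k) ^ (-(1+ρ)) ≤ (N:ℝ) ^ (-ρ) / ρ := by
  have hN1 : (1:ℝ) ≤ N := by exact_mod_cast hN
  have hpart : ∀ K : ℕ, ρ * ∑ k ∈ Finset.range K, ((N:ℝ)+1+k) ^ (-(1+ρ))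
      ≤ (N:ℝ)^(-ρ) - ((N:ℝ)+K)^(-ρ) := by
    intro K
    induction K with
    | zero => simp
    | succ K ih =>
      have hK : (0:ℝ) ≤ K := Nat.cast_nonneg K
      have hstep := bern_step hρ0 hρ1 (m := (N:ℝ)+K+1) (by linarith)
      rw [show ((N:ℝ)+K+1) - 1 = (N:ℝ)+K by ring] at hstep
      rw [Finset.sum_range_succ, mul_add]
      push_cast
      rw [show (N:ℝ)+1+(K:ℝ) = (N:ℝ)+(K:ℝ)+1 by ring,
        show (N:ℝ)+((K:ℝ)+1) = (N:ℝ)+(K:ℝ)+1 by ring]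
      linarith
  refine Real.tsum_le_of_sum_range_le (fun k => by positivity) (fun K => ?_)
  rw [le_div_iff₀ hρ0]
  have h2 : (0:ℝ) ≤ ((N:ℝ)+K)^(-ρ) := Real.rpow_nonneg (by linarith [(Nat.cast_nonneg K : (0:ℝ) ≤ K)]) _
  have := hpart K
  linarith [this, h2]

lemma ennreal_split_nat (g : ℕ → ℝ≥0∞) (N : ℕ) :
    ∑' i : ℕ, g i = (∑ i ∈ Finset.range N, g i) + ∑' i : ℕ, g (i + N) := by
  rw [← Summable.tsum_add_tsum_compl (s := ↑(Finset.range N)) ENNReal.summable ENNReal.summable]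
  congr 1
  · exact Finset.tsum_subtype (Finset.range N) g
  · let e : ℕ ≃ ↑((↑(Finset.range N) : Set ℕ))ᶜ :=
      (notMemRangeEquiv N).symm.trans (Equiv.subtypeEquivRight (by
        intro x; simp [Set.mem_compl_iff]))
    rw [← e.tsum_eq (fun i => g i.1)]
    refine tsum_congr fun j => ?_
    have : ((e j : ℕ)) = j + N := rfl
    simp [this]

lemma natsum_le {ρ : ℝ} (hρ0 : 0 < ρ) (hρ1 : ρ ≤ 1) {s : ℝ} (hs0 : 0 < s) (hs1 : s ≤ 1) :
    ∑' k : ℕ, ENNReal.ofReal ((1 + s * ((k:ℝ)+1)) ^ (-(1+ρ)))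
      ≤ ENNReal.ofReal ((2 + 1/ρ)/s) := by
  have hs1' : (1:ℝ) ≤ 1/s := by rw [le_div_iff₀ hs0]; linarith
  set N : ℕ := ⌈1/s⌉₊ with hNdef
  have hN1 : 1 ≤ N := Nat.one_le_ceil_iff.2 (by positivity)
  have hNge : 1/s ≤ (N:ℝ) := Nat.le_ceil _
  have hNle : (N:ℝ) ≤ 2/s := by
    have := Nat.ceil_lt_add_one (by positivity : (0:ℝ) ≤ 1/s)
    have h2 : (N:ℝ) < 1/s + 1 := this
    have : 1/s + 1 ≤ 2/s := by
      rw [show (2:ℝ)/s = 1/s + 1/s by ring]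
      linarith
    linarith
  rw [ennreal_split_nat (fun k : ℕ => ENNReal.ofReal ((1 + s * ((k:ℝ)+1)) ^ (-(1+ρ)))) N]
  have head : ∑ i ∈ Finset.range N, ENNReal.ofReal ((1 + s * ((i:ℝ)+1)) ^ (-(1+ρ)))
      ≤ ENNReal.ofReal (2/s) := by
    calc ∑ i ∈ Finset.range N, ENNReal.ofReal ((1 + s * ((i:ℝ)+1)) ^ (-(1+ρ)))
        ≤ ∑ _i ∈ Finset.range N, 1 := by
          refine Finset.sum_le_sum fun i _ => ?_
          rw [ENNReal.ofReal_le_one]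
          refine Real.rpow_le_one_of_one_le_of_nonpos ?_ (by linarith)
          have : (0:ℝ) ≤ s * ((i:ℝ)+1) := by positivity
          linarith
      _ = (N : ℝ≥0∞) := by simp
      _ = ENNReal.ofReal (N:ℝ) := (ENNReal.ofReal_natCast N).symm
      _ ≤ ENNReal.ofReal (2/s) := ENNReal.ofReal_le_ofReal hNle
  have tail : ∑' i : ℕ, ENNReal.ofReal ((1 + s * (((i+N:ℕ):ℝ)+1)) ^ (-(1+ρ)))
      ≤ ENNReal.ofReal (s⁻¹/ρ) := by
    have step1 : ∀ i : ℕ, ENNReal.ofReal ((1 + s * (((i+N:ℕ):ℝ)+1)) ^ (-(1+ρ)))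
        ≤ ENNReal.ofReal (s ^ (-(1+ρ)) * ((N:ℝ)+1+i) ^ (-(1+ρ))) := by
      intro i
      refine ENNReal.ofReal_le_ofReal ?_
      rw [← Real.mul_rpow hs0.le (by positivity)]
      refine Real.rpow_le_rpow_of_nonpos (by positivity) ?_ (by linarith)
      push_cast
      nlinarith [Nat.cast_nonneg (α := ℝ) i, Nat.cast_nonneg (α := ℝ) N]
    calc ∑' i : ℕ, ENNReal.ofReal ((1 + s * (((i+N:ℕ):ℝ)+1)) ^ (-(1+ρ)))
        ≤ ∑' i : ℕ, ENNReal.ofReal (s ^ (-(1+ρ)) * ((N:ℝ)+1+i) ^ (-(1+ρ))) :=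
          ENNReal.tsum_le_tsum step1
      _ = ∑' i : ℕ, ENNReal.ofReal (s ^ (-(1+ρ))) * ENNReal.ofReal (((N:ℝ)+1+i) ^ (-(1+ρ))) := by
          congr 1; funext i; rw [ENNReal.ofReal_mul (by positivity)]
      _ = ENNReal.ofReal (s ^ (-(1+ρ))) * ∑' i : ℕ, ENNReal.ofReal (((N:ℝ)+1+i) ^ (-(1+ρ))) :=
          ENNReal.tsum_mul_left
      _ = ENNReal.ofReal (s ^ (-(1+ρ))) * ENNReal.ofReal (∑' i : ℕ, ((N:ℝ)+1+i) ^ (-(1+ρ))) := by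
          rw [ENNReal.ofReal_tsum_of_nonneg (fun i => by positivity) (tail_summable hρ0 N)]
      _ ≤ ENNReal.ofReal (s ^ (-(1+ρ))) * ENNReal.ofReal (s^ρ/ρ) := by
          refine mul_le_mul_right (ENNReal.ofReal_le_ofReal ?_) _
          refine le_trans (tail_sum hρ0 hρ1 hN1) ?_
          refine div_le_div_of_nonneg_right ?_ hρ0.le
          calc (N:ℝ) ^ (-ρ) ≤ (1/s) ^ (-ρ) :=
                Real.rpow_le_rpow_of_nonpos (by positivity) hNge (by linarith)
            _ = s ^ ρ := by
                rw [one_div, Real.inv_rpow hs0.le, Real.rpow_neg hs0.le, inv_inv]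
      _ = ENNReal.ofReal (s ^ (-(1+ρ)) * (s^ρ/ρ)) := by
          rw [ENNReal.ofReal_mul (by positivity)]
      _ = ENNReal.ofReal (s⁻¹/ρ) := by
          congr 1
          rw [div_eq_mul_inv, div_eq_mul_inv, ← mul_assoc, ← Real.rpow_add hs0,
            show -(1+ρ)+ρ = -1 by ring, Real.rpow_neg_one]
  calc ∑ i ∈ Finset.range N, ENNReal.ofReal ((1 + s * ((i:ℝ)+1)) ^ (-(1+ρ)))
        + ∑' i : ℕ, ENNReal.ofReal ((1 + s * (((i+N:ℕ):ℝ)+1)) ^ (-(1+ρ)))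
      ≤ ENNReal.ofReal (2/s) + ENNReal.ofReal (s⁻¹/ρ) := add_le_add head tail
    _ = ENNReal.ofReal (2/s + s⁻¹/ρ) := (ENNReal.ofReal_add (by positivity) (by positivity)).symm
    _ = ENNReal.ofReal ((2 + 1/ρ)/s) := by
        congr 1
        field_simp

lemma zsum_le {ρ : ℝ} (hρ0 : 0 < ρ) (hρ1 : ρ ≤ 1) {s : ℝ} (hs0 : 0 < s) (hs1 : s ≤ 1) :
    ∑' k : ℤ, ENNReal.ofReal ((1 + s * |(k:ℝ)|) ^ (-(1+ρ)))
      ≤ ENNReal.ofReal ((5 + 2/ρ)/s) := by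
  have hs1' : (1:ℝ) ≤ 1/s := by rw [le_div_iff₀ hs0]; linarith
  rw [tsum_of_add_one_of_neg_add_one ENNReal.summable ENNReal.summable]
  have e1 : ∀ n : ℕ, ENNReal.ofReal ((1 + s * |((((n:ℤ))+1 : ℤ):ℝ)|) ^ (-(1+ρ)))
      = ENNReal.ofReal ((1 + s * ((n:ℝ)+1)) ^ (-(1+ρ))) := by
    intro n
    congr 2
    rw [abs_of_nonneg] <;> push_cast <;> [skip; positivity]
    norm_num
  have e2 : ∀ n : ℕ, ENNReal.ofReal ((1 + s * |((-(((n:ℤ))+1) : ℤ):ℝ)|) ^ (-(1+ρ)))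
      = ENNReal.ofReal ((1 + s * ((n:ℝ)+1)) ^ (-(1+ρ))) := by
    intro n
    congr 2
    push_cast
    rw [abs_neg, abs_of_nonneg (by positivity)]
  calc (∑' n : ℕ, ENNReal.ofReal ((1 + s * |(((((n:ℤ))+1) : ℤ):ℝ)|) ^ (-(1+ρ))))
        + ENNReal.ofReal ((1 + s * |((0:ℤ):ℝ)|) ^ (-(1+ρ)))
        + ∑' n : ℕ, ENNReal.ofReal ((1 + s * |((-(((n:ℤ))+1) : ℤ):ℝ)|) ^ (-(1+ρ)))
      = (∑' n : ℕ, ENNReal.ofReal ((1 + s * ((n:ℝ)+1)) ^ (-(1+ρ))))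
        + ENNReal.ofReal ((1 + s * ((0:ℕ):ℝ)) ^ (-(1+ρ)))
        + ∑' n : ℕ, ENNReal.ofReal ((1 + s * ((n:ℝ)+1)) ^ (-(1+ρ))) := by
        rw [tsum_congr e1, tsum_congr e2]
        norm_num
    _ ≤ ENNReal.ofReal ((2 + 1/ρ)/s) + ENNReal.ofReal 1 + ENNReal.ofReal ((2 + 1/ρ)/s) := by
        refine add_le_add (add_le_add (natsum_le hρ0 hρ1 hs0 hs1) ?_) (natsum_le hρ0 hρ1 hs0 hs1)
        refine ENNReal.ofReal_le_ofReal ?_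
        norm_num
    _ = ENNReal.ofReal ((2 + 1/ρ)/s + 1 + (2 + 1/ρ)/s) := by
        rw [← ENNReal.ofReal_add (by positivity) (by norm_num),
          ← ENNReal.ofReal_add (by positivity) (by positivity)]
    _ ≤ ENNReal.ofReal ((5 + 2/ρ)/s) := by
        refine ENNReal.ofReal_le_ofReal ?_
        have h2 : (2+1/ρ)/s + 1 + (2+1/ρ)/s = (4+2/ρ)/s + 1 := by ring
        have h3 : (4+2/ρ)/s + 1/s = (5+2/ρ)/s := by ring
        linarith [hs1']

lemma tsum_pi_prod (n : ℕ) (V : ℤ → ℝ≥0∞) :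
    ∑' x : Fin n → ℤ, ∏ i, V (x i) = (∑' k : ℤ, V k) ^ n := by
  induction n with
  | zero =>
    simp only [Finset.univ_eq_empty, Finset.prod_empty, pow_zero]
    exact tsum_eq_single (fun i => i.elim0) (fun b hb =>
      absurd (Subsingleton.elim b _) hb) |>.trans rfl
  | succ n ih =>
    rw [← (Fin.consEquiv (fun _ : Fin (n+1) => ℤ)).tsum_eq]
    have h1 : ∀ p : ℤ × (Fin n → ℤ),
        (∏ i, V ((Fin.consEquiv (fun _ : Fin (n+1) => ℤ)) p i))
        = V p.1 * ∏ i, V (p.2 i) := by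
      intro p
      rw [Fin.prod_univ_succ]
      congr 1
    rw [tsum_congr h1, ENNReal.tsum_prod']
    calc ∑' (a : ℤ) (b : Fin n → ℤ), V a * ∏ i, V (b i)
        = ∑' (a : ℤ), V a * ∑' (b : Fin n → ℤ), ∏ i, V (b i) := by
          refine tsum_congr fun a => ?_
          exact ENNReal.tsum_mul_left
      _ = (∑' k : ℤ, V k) * (∑' k : ℤ, V k) ^ n := by
          rw [ih, ENNReal.tsum_mul_right]
      _ = (∑' k : ℤ, V k) ^ (n+1) := by ring

end Statement15Aux

open Statement15Aux

/-- For `n ≥ 1` and `r > 1` there is a constant `C > 0`, depending only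
on `n` and `r`, such that for every `Ψ : ℝⁿ → ℂ` with
`(1 + ‖x‖)^{n+r}·|Ψ(x)| ≤ M` for all `x`, and every `s > 0`:
`∑_{x ∈ ℤⁿ, x ≠ 0} |Ψ(s·x)| ≤ C·M·s^{-n}` if `s ≤ 1`, and `≤ C·M·s^{-r}` if `s ≥ 1`
(the sums being taken in `[0,∞]`, so that they are in particular finite). -/
theorem statement15 (n : ℕ) (hn : 1 ≤ n) (r : ℝ) (hr : 1 < r) :
    ∃ C : ℝ, 0 < C ∧ ∀ (Ψ : (Fin n → ℝ) → ℂ) (M : ℝ),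
      (∀ x : Fin n → ℝ, (1 + ‖x‖) ^ ((n : ℝ) + r) * ‖Ψ x‖ ≤ M) →
      ∀ s : ℝ, 0 < s →
        (s ≤ 1 →
          ∑' x : {x : Fin n → ℤ // x ≠ 0},
              (‖Ψ (fun i => s * ((x : Fin n → ℤ) i : ℝ))‖₊ : ENNReal)
            ≤ ENNReal.ofReal (C * M * s ^ (-(n : ℝ)))) ∧
        (1 ≤ s →
          ∑' x : {x : Fin n → ℤ // x ≠ 0},
              (‖Ψ (fun i => s * ((x : Fin n → ℤ) i : ℝ))‖₊ : ENNReal)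
            ≤ ENNReal.ofReal (C * M * s ^ (-r))) := by
  have hn0 : (0:ℝ) < n := by exact_mod_cast hn
  set ρ : ℝ := min (r / n) 1 with hρdef
  have hρ0 : 0 < ρ := lt_min (by positivity) one_pos
  have hρ1 : ρ ≤ 1 := min_le_right _ _
  have hnρ : (n:ℝ) * ρ ≤ r := by
    calc (n:ℝ) * ρ ≤ (n:ℝ) * (r/n) := by
          refine mul_le_mul_of_nonneg_left (min_le_left _ _) hn0.le
      _ = r := by field_simp
  set c₁ : ℝ := 5 + 2/ρ with hc₁def
  have hc₁ : 0 < c₁ := by positivity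
  refine ⟨2 ^ ((n:ℝ) + r) * c₁ ^ n, by positivity, ?_⟩
  intro Ψ M hM s hs
  have hM0 : 0 ≤ M := le_trans (by positivity) (hM 0)
  have h2r : (1:ℝ) ≤ 2 ^ ((n:ℝ)+r) := Real.one_le_rpow one_le_two (by positivity)
  -- generic pointwise bound
  have key : ∀ (x : Fin n → ℤ) (B : ℝ), 0 < B →
      B ≤ (1 + ‖(fun i => s * ((x i : ℤ) : ℝ) : Fin n → ℝ)‖) ^ ((n:ℝ)+r) →
      (‖Ψ (fun i => s * ((x i : ℤ) : ℝ))‖₊ : ℝ≥0∞) ≤ ENNReal.ofReal (M / B) := by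
    intro x B hB hBle
    set y : Fin n → ℝ := fun i => s * ((x i : ℤ) : ℝ) with hy
    have h2 : ‖Ψ y‖ ≤ M / B := by
      rw [le_div_iff₀ hB]
      calc ‖Ψ y‖ * B ≤ ‖Ψ y‖ * (1 + ‖y‖) ^ ((n:ℝ)+r) :=
            mul_le_mul_of_nonneg_left hBle (norm_nonneg _)
        _ = (1 + ‖y‖) ^ ((n:ℝ)+r) * ‖Ψ y‖ := mul_comm _ _
        _ ≤ M := hM y
    rw [← ENNReal.ofReal_coe_nnreal, coe_nnnorm]
    exact ENNReal.ofReal_le_ofReal h2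
  -- product bound
  have prodb : ∀ (a : Fin n → ℝ) (c : ℝ), (∀ i, 0 ≤ a i) → (∀ i, a i ≤ c) → 0 ≤ c →
      ∏ i, (1 + a i) ^ (1+ρ) ≤ (1 + c) ^ ((n:ℝ)+r) := by
    intro a c ha hac hc
    calc ∏ i, (1 + a i) ^ (1+ρ)
        ≤ ∏ _i : Fin n, (1 + c) ^ (1+ρ) := by
          refine Finset.prod_le_prod (fun i _ => Real.rpow_nonneg (by linarith [ha i]) _) (fun i _ => ?_)
          refine Real.rpow_le_rpow (by linarith [ha i]) (by linarith [hac i]) (by linarith)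
      _ = ((1 + c) ^ (1+ρ)) ^ (n:ℕ) := by
          rw [Finset.prod_const, Finset.card_univ, Fintype.card_fin]
      _ = (1 + c) ^ ((1+ρ) * n) := by
          rw [← Real.rpow_natCast ((1 + c) ^ (1+ρ)) n, ← Real.rpow_mul (by linarith)]
      _ ≤ (1 + c) ^ ((n:ℝ)+r) := by
          refine Real.rpow_le_rpow_of_exponent_le (by linarith) ?_
          have : (1+ρ) * (n:ℝ) = (n:ℝ) + (n:ℝ)*ρ := by ring
          linarith
  constructor
  · -- case s ≤ 1
    intro hs1
    set V : ℤ → ℝ≥0∞ := fun k => ENNReal.ofReal ((1 + s * |(k:ℝ)|) ^ (-(1+ρ))) with hV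
    have term : ∀ x : {x : Fin n → ℤ // x ≠ 0},
        (‖Ψ (fun i => s * ((x.1 i : ℤ) : ℝ))‖₊ : ℝ≥0∞)
          ≤ ENNReal.ofReal M * ∏ i, V (x.1 i) := by
      intro x
      set B : ℝ := ∏ i, (1 + s * |((x.1 i : ℤ):ℝ)|) ^ (1+ρ) with hB
      have hBpos : 0 < B :=
        Finset.prod_pos fun i _ => Real.rpow_pos_of_pos (by positivity) _
      have hyi : ∀ i, s * |((x.1 i : ℤ):ℝ)|
          ≤ ‖(fun i => s * ((x.1 i : ℤ) : ℝ) : Fin n → ℝ)‖ := by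
        intro i
        have h := norm_le_pi_norm (fun i => s * ((x.1 i : ℤ) : ℝ) : Fin n → ℝ) i
        rwa [Real.norm_eq_abs, abs_mul, abs_of_pos hs] at h
      have hBle : B ≤ (1 + ‖(fun i => s * ((x.1 i : ℤ) : ℝ) : Fin n → ℝ)‖) ^ ((n:ℝ)+r) :=
        prodb _ _ (fun i => by positivity) hyi (norm_nonneg _)
      refine (key x.1 B hBpos hBle).trans ?_
      have hBeq : M / B = M * ∏ i, (1 + s * |((x.1 i : ℤ):ℝ)|) ^ (-(1+ρ)) := by
        rw [div_eq_mul_inv]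
        congr 1
        rw [← Finset.prod_inv_distrib]
        refine Finset.prod_congr rfl fun i _ => ?_
        rw [← Real.rpow_neg (by positivity)]
      rw [hBeq, ENNReal.ofReal_mul hM0,
        ENNReal.ofReal_prod_of_nonneg (fun i _ => Real.rpow_nonneg (by positivity) _)]
    calc ∑' x : {x : Fin n → ℤ // x ≠ 0},
            (‖Ψ (fun i => s * ((x.1 i : ℤ) : ℝ))‖₊ : ℝ≥0∞)
        ≤ ∑' x : {x : Fin n → ℤ // x ≠ 0}, ENNReal.ofReal M * ∏ i, V (x.1 i) :=
          ENNReal.tsum_le_tsum term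
      _ ≤ ∑' x : Fin n → ℤ, ENNReal.ofReal M * ∏ i, V (x i) :=
          ENNReal.tsum_comp_le_tsum_of_injective Subtype.val_injective _
      _ = ENNReal.ofReal M * ∑' x : Fin n → ℤ, ∏ i, V (x i) := ENNReal.tsum_mul_left
      _ = ENNReal.ofReal M * (∑' k : ℤ, V k) ^ n := by rw [tsum_pi_prod]
      _ ≤ ENNReal.ofReal M * (ENNReal.ofReal (c₁/s)) ^ n := by
          gcongr
          exact zsum_le hρ0 hρ1 hs hs1
      _ = ENNReal.ofReal (M * (c₁/s)^n) := by
          rw [← ENNReal.ofReal_pow (by positivity), ← ENNReal.ofReal_mul hM0]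
      _ ≤ ENNReal.ofReal (2 ^ ((n:ℝ)+r) * c₁ ^ n * M * s ^ (-(n:ℝ))) := by
          refine ENNReal.ofReal_le_ofReal ?_
          have heq : M * (c₁/s)^n = c₁^n * M * s^(-(n:ℝ)) := by
            rw [Real.rpow_neg hs.le, Real.rpow_natCast, div_pow]
            field_simp
          have hnn : 0 ≤ c₁^n * M * s^(-(n:ℝ)) := by positivity
          have h3 := mul_le_mul_of_nonneg_right h2r hnn
          rw [one_mul] at h3
          calc M * (c₁/s)^n = c₁^n * M * s^(-(n:ℝ)) := heq
            _ ≤ 2 ^ ((n:ℝ)+r) * (c₁^n * M * s^(-(n:ℝ))) := h3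
            _ = 2 ^ ((n:ℝ)+r) * c₁ ^ n * M * s ^ (-(n:ℝ)) := by ring
  · -- case 1 ≤ s
    intro hs1
    set W : ℤ → ℝ≥0∞ := fun k => ENNReal.ofReal ((1 + |(k:ℝ)|) ^ (-(1+ρ))) with hW
    have term : ∀ x : {x : Fin n → ℤ // x ≠ 0},
        (‖Ψ (fun i => s * ((x.1 i : ℤ) : ℝ))‖₊ : ℝ≥0∞)
          ≤ ENNReal.ofReal (M * 2 ^ ((n:ℝ)+r) * s ^ (-r)) * ∏ i, W (x.1 i) := by
      intro x
      set x' : Fin n → ℝ := fun i => ((x.1 i : ℤ) : ℝ) with hx'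
      have hx1 : (1:ℝ) ≤ ‖x'‖ := by
        obtain ⟨j, hj⟩ := Function.ne_iff.1 x.2
        have hj1 : (1:ℝ) ≤ |((x.1 j : ℤ):ℝ)| := by
          have := Int.one_le_abs hj
          exact_mod_cast this
        calc (1:ℝ) ≤ |((x.1 j : ℤ):ℝ)| := hj1
          _ = ‖x' j‖ := (Real.norm_eq_abs _).symm
          _ ≤ ‖x'‖ := norm_le_pi_norm x' j
      have hynorm : ‖(fun i => s * ((x.1 i : ℤ) : ℝ) : Fin n → ℝ)‖ = s * ‖x'‖ := by
        have : (fun i => s * ((x.1 i : ℤ) : ℝ) : Fin n → ℝ) = s • x' := rfl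
        rw [this, norm_smul, Real.norm_eq_abs, abs_of_pos hs]
      set P : ℝ := ∏ i, (1 + |((x.1 i : ℤ):ℝ)|) ^ (1+ρ) with hP
      have hPpos : 0 < P :=
        Finset.prod_pos fun i _ => Real.rpow_pos_of_pos (by positivity) _
      set B : ℝ := s ^ r * (2:ℝ) ^ (-((n:ℝ)+r)) * P with hBdef
      have hBpos : 0 < B := by
        have := Real.rpow_pos_of_pos hs r
        have := Real.rpow_pos_of_pos (two_pos (α := ℝ)) (-((n:ℝ)+r))
        positivity
      have hBle : B ≤ (1 + ‖(fun i => s * ((x.1 i : ℤ) : ℝ) : Fin n → ℝ)‖) ^ ((n:ℝ)+r) := by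
        have hxi : ∀ i, |((x.1 i : ℤ):ℝ)| ≤ ‖x'‖ := by
          intro i
          calc |((x.1 i : ℤ):ℝ)| = ‖x' i‖ := (Real.norm_eq_abs _).symm
            _ ≤ ‖x'‖ := norm_le_pi_norm x' i
        have hPle : P ≤ (1 + ‖x'‖) ^ ((n:ℝ)+r) :=
          prodb _ _ (fun i => abs_nonneg _) hxi (by linarith)
        have hA : (s/2) * (1 + ‖x'‖) ≤ 1 + ‖(fun i => s * ((x.1 i : ℤ) : ℝ) : Fin n → ℝ)‖ := by
          rw [hynorm]
          nlinarith [mul_le_mul_of_nonneg_left hx1 hs.le]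
        have hD : s ^ r * (2:ℝ) ^ (-((n:ℝ)+r)) ≤ (s/2) ^ ((n:ℝ)+r) := by
          rw [div_rpow hs.le (by norm_num), Real.rpow_neg (by norm_num), div_eq_mul_inv]
          refine mul_le_mul_of_nonneg_right ?_ (by positivity)
          exact Real.rpow_le_rpow_of_exponent_le hs1 (by linarith)
        calc B ≤ (s/2) ^ ((n:ℝ)+r) * P := by
              refine mul_le_mul_of_nonneg_right hD hPpos.le
          _ ≤ (s/2) ^ ((n:ℝ)+r) * (1 + ‖x'‖) ^ ((n:ℝ)+r) := by
              refine mul_le_mul_of_nonneg_left hPle (by positivity)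
          _ = ((s/2) * (1 + ‖x'‖)) ^ ((n:ℝ)+r) := (Real.mul_rpow (by positivity) (by linarith)).symm
          _ ≤ (1 + ‖(fun i => s * ((x.1 i : ℤ) : ℝ) : Fin n → ℝ)‖) ^ ((n:ℝ)+r) := by
              refine Real.rpow_le_rpow (by positivity) hA (by positivity)
      refine (key x.1 B hBpos hBle).trans ?_
      have hsr : s ^ r * s ^ (-r) = 1 := by
        rw [← Real.rpow_add hs, show r + -r = (0:ℝ) by ring, Real.rpow_zero]
      have h22 : (2:ℝ) ^ (-((n:ℝ)+r)) * (2:ℝ) ^ ((n:ℝ)+r) = 1 := by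
        rw [← Real.rpow_add two_pos, show -((n:ℝ)+r) + ((n:ℝ)+r) = (0:ℝ) by ring,
          Real.rpow_zero]
      have hprodinv : P * (∏ i, (1 + |((x.1 i : ℤ):ℝ)|) ^ (-(1+ρ))) = 1 := by
        rw [hP, ← Finset.prod_mul_distrib]
        refine Finset.prod_eq_one fun i _ => ?_
        rw [← Real.rpow_add (by positivity), show (1+ρ) + -(1+ρ) = (0:ℝ) by ring,
          Real.rpow_zero]
      have hBinv : M / B = M * 2 ^ ((n:ℝ)+r) * s ^ (-r)
          * ∏ i, (1 + |((x.1 i : ℤ):ℝ)|) ^ (-(1+ρ)) := by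
        have hmul : B * (s ^ (-r) * (2:ℝ) ^ ((n:ℝ)+r)
            * ∏ i, (1 + |((x.1 i : ℤ):ℝ)|) ^ (-(1+ρ))) = 1 := by
          calc B * (s ^ (-r) * (2:ℝ) ^ ((n:ℝ)+r)
                * ∏ i, (1 + |((x.1 i : ℤ):ℝ)|) ^ (-(1+ρ)))
              = (s ^ r * s ^ (-r)) * ((2:ℝ) ^ (-((n:ℝ)+r)) * (2:ℝ) ^ ((n:ℝ)+r))
                * (P * ∏ i, (1 + |((x.1 i : ℤ):ℝ)|) ^ (-(1+ρ))) := by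
                rw [hBdef]; ring
            _ = 1 := by rw [hsr, h22, hprodinv]; ring
        rw [div_eq_mul_inv, inv_eq_of_mul_eq_one_right hmul]
        ring
      rw [hBinv, ENNReal.ofReal_mul (by positivity),
        ENNReal.ofReal_prod_of_nonneg (fun i _ => Real.rpow_nonneg (by positivity) _)]
    calc ∑' x : {x : Fin n → ℤ // x ≠ 0},
            (‖Ψ (fun i => s * ((x.1 i : ℤ) : ℝ))‖₊ : ℝ≥0∞)
        ≤ ∑' x : {x : Fin n → ℤ // x ≠ 0},
            ENNReal.ofReal (M * 2 ^ ((n:ℝ)+r) * s ^ (-r)) * ∏ i, W (x.1 i) :=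
          ENNReal.tsum_le_tsum term
      _ ≤ ∑' x : Fin n → ℤ, ENNReal.ofReal (M * 2 ^ ((n:ℝ)+r) * s ^ (-r)) * ∏ i, W (x i) :=
          ENNReal.tsum_comp_le_tsum_of_injective Subtype.val_injective _
      _ = ENNReal.ofReal (M * 2 ^ ((n:ℝ)+r) * s ^ (-r)) * ∑' x : Fin n → ℤ, ∏ i, W (x i) :=
          ENNReal.tsum_mul_left
      _ = ENNReal.ofReal (M * 2 ^ ((n:ℝ)+r) * s ^ (-r)) * (∑' k : ℤ, W k) ^ n := by
          rw [tsum_pi_prod]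
      _ ≤ ENNReal.ofReal (M * 2 ^ ((n:ℝ)+r) * s ^ (-r)) * (ENNReal.ofReal c₁) ^ n := by
          gcongr
          have := zsum_le hρ0 hρ1 one_pos (le_refl (1:ℝ))
          simp only [one_mul, div_one] at this
          exact this
      _ = ENNReal.ofReal (M * 2 ^ ((n:ℝ)+r) * s ^ (-r) * c₁ ^ n) := by
          rw [← ENNReal.ofReal_pow hc₁.le, ← ENNReal.ofReal_mul (by positivity)]
      _ = ENNReal.ofReal (2 ^ ((n:ℝ)+r) * c₁ ^ n * M * s ^ (-r)) := by
          congr 1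
          ring
end
end
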